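/- Let E, Z be Banach spaces and g : V × Z → E be C¹ on an open set V ⊆ E, linear in the second variable. Suppose η₁, η₂ : [a,b] → V are Carathéodory solutions of y'(t) = g(y(t),γ(t)) for the same γ ∈ L¹([a,b],Z), and η₁(t₀) = η₂(t₀) for some t₀ ∈ [a,b]. Then η₁ = η₂ on [a,b]. -/

import Mathlib

open Set MeasureTheory

/-- A Carathéodory solution of `y'(t) = g(y(t), γ(t))` on `[a,b]`, anchored at `t₀`. -/
def IsCaraSol {X Z : Type*} [NormedAddCommGroup X] [NormedSpace ℝ X]
    (g : X → Z → X) (γ : ℝ → Z) (a b t₀ : ℝ) (η : ℝ → X) : Prop :=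
  ContinuousOn η (Icc a b) ∧
  IntegrableOn (fun s => g (η s) (γ s)) (Icc a b) ∧
  ∀ t ∈ Icc a b, η t = η t₀ + ∫ s in t₀..t, g (η s) (γ s)

lemma loc_lip {E Z : Type*} [NormedAddCommGroup E] [NormedSpace ℝ E]
    [NormedAddCommGroup Z] [NormedSpace ℝ Z]
    (V : Set E) (hV : IsOpen V) (g : E → Z → E)
    (hg : ContDiffOn ℝ 1 (fun p : E × Z => g p.1 p.2) (V ×ˢ (univ : Set Z)))
    (hlin : ∀ x ∈ V, IsLinearMap ℝ (g x)) (x : E) (hx : x ∈ V) :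
    ∃ r > 0, ∃ L > 0, Metric.ball x r ⊆ V ∧
      ∀ y₁ ∈ Metric.ball x r, ∀ y₂ ∈ Metric.ball x r, ∀ z : Z,
        ‖g y₁ z - g y₂ z‖ ≤ L * ‖z‖ * ‖y₁ - y₂‖ := by
  set f : E × Z → E := fun p => g p.1 p.2 with hf
  have hU : IsOpen (V ×ˢ (univ : Set Z)) := hV.prod isOpen_univ
  have hdiff : DifferentiableOn ℝ f (V ×ˢ (univ : Set Z)) := hg.differentiableOn one_ne_zero
  have hf' : ContinuousOn (fderiv ℝ f) (V ×ˢ (univ : Set Z)) :=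
    hg.continuousOn_fderiv_of_isOpen hU le_rfl
  have hx0 : ((x, (0:Z)) : E × Z) ∈ V ×ˢ (univ : Set Z) := ⟨hx, trivial⟩
  set C : ℝ := ‖fderiv ℝ f (x, 0)‖ + 1 with hC
  have hCpos : 0 < C := by positivity
  have hc : ContinuousAt (fderiv ℝ f) (x, 0) := hf'.continuousAt (hU.mem_nhds hx0)
  have hev : ∀ᶠ p in nhds ((x, (0:Z)) : E × Z), ‖fderiv ℝ f p‖ < C ∧ p ∈ V ×ˢ (univ : Set Z) := by
    refine Filter.Eventually.and ?_ (hU.eventually_mem hx0)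
    have : ContinuousAt (fun p => ‖fderiv ℝ f p‖) (x, 0) := hc.norm
    exact this.eventually_lt continuousAt_const (by simp [hC])
  obtain ⟨ε, hεpos, hball⟩ := Metric.eventually_nhds_iff_ball.mp hev
  have hballV : Metric.ball x ε ⊆ V := by
    intro y hy
    have : ((y, (0:Z)) : E × Z) ∈ Metric.ball ((x, (0:Z)) : E × Z) ε := by
      simp [Prod.dist_eq, Metric.mem_ball, hεpos, Metric.mem_ball.mp hy]
    exact (hball _ this).2.1
  -- key estimate for small z
  have key : ∀ z : Z, ‖z‖ < ε → ∀ y₁ ∈ Metric.ball x ε, ∀ y₂ ∈ Metric.ball x ε,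
      ‖g y₁ z - g y₂ z‖ ≤ C * ‖y₁ - y₂‖ := by
    intro z hz y₁ hy₁ y₂ hy₂
    have hmem : ∀ y ∈ Metric.ball x ε, ((y, z) : E × Z) ∈ Metric.ball ((x, (0:Z)) : E × Z) ε := by
      intro y hy
      simp only [Metric.mem_ball, Prod.dist_eq, max_lt_iff]
      exact ⟨Metric.mem_ball.mp hy, by simpa [dist_eq_norm] using hz⟩
    have hder : ∀ y ∈ Metric.ball x ε, HasFDerivWithinAt (fun u => g u z)
        ((fderiv ℝ f (y, z)).comp ((ContinuousLinearMap.id ℝ E).prod 0)) (Metric.ball x ε) y := by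
      intro y hy
      have hd : DifferentiableAt ℝ f (y, z) :=
        hdiff.differentiableAt (hU.mem_nhds ⟨hballV hy, trivial⟩)
      have h1 : HasFDerivAt (fun u : E => ((u, z) : E × Z))
          ((ContinuousLinearMap.id ℝ E).prod 0) y :=
        HasFDerivAt.prodMk (hasFDerivAt_id y) (hasFDerivAt_const z y)
      exact (hd.hasFDerivAt.comp y h1).hasFDerivWithinAt
    have hbd : ∀ y ∈ Metric.ball x ε,
        ‖(fderiv ℝ f (y, z)).comp ((ContinuousLinearMap.id ℝ E).prod 0)‖ ≤ C := by
      intro y hy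
      have h1 : ‖(ContinuousLinearMap.id ℝ E).prod (0 : E →L[ℝ] Z)‖ ≤ 1 := by
        refine ContinuousLinearMap.opNorm_le_bound _ zero_le_one (fun v => by
          simp [Prod.norm_def])
      calc ‖(fderiv ℝ f (y, z)).comp ((ContinuousLinearMap.id ℝ E).prod 0)‖
          ≤ ‖fderiv ℝ f (y, z)‖ * ‖(ContinuousLinearMap.id ℝ E).prod (0 : E →L[ℝ] Z)‖ :=
            ContinuousLinearMap.opNorm_comp_le _ _
        _ ≤ ‖fderiv ℝ f (y, z)‖ * 1 := by
            exact mul_le_mul_of_nonneg_left h1 (norm_nonneg _)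
        _ ≤ C := by
            rw [mul_one]; exact (hball _ (hmem y hy)).1.le
    have := (convex_ball x ε).norm_image_sub_le_of_norm_hasFDerivWithin_le hder hbd hy₂ hy₁
    simpa using this
  refine ⟨ε, hεpos, 2 * C / ε, by positivity, hballV, ?_⟩
  intro y₁ hy₁ y₂ hy₂ z
  rcases eq_or_ne z 0 with rfl | hz
  · have h1 : g y₁ (0:Z) = 0 := (hlin y₁ (hballV hy₁)).map_zero
    have h2 : g y₂ (0:Z) = 0 := (hlin y₂ (hballV hy₂)).map_zero
    simp [h1, h2]
  · have hznorm : 0 < ‖z‖ := norm_pos_iff.mpr hz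
    set c : ℝ := ε / (2 * ‖z‖) with hc'
    have hcpos : 0 < c := by positivity
    have hz' : ‖c • z‖ < ε := by
      rw [norm_smul, Real.norm_eq_abs, abs_of_pos hcpos, hc']
      rw [div_mul_eq_mul_div, mul_comm (2:ℝ) ‖z‖, ← div_div]
      rw [mul_div_assoc, div_self hznorm.ne', mul_one]
      linarith
    have hkey := key (c • z) hz' y₁ hy₁ y₂ hy₂
    have e1 : g y₁ (c • z) = c • g y₁ z := (hlin y₁ (hballV hy₁)).map_smul c z
    have e2 : g y₂ (c • z) = c • g y₂ z := (hlin y₂ (hballV hy₂)).map_smul c z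
    rw [e1, e2, ← smul_sub, norm_smul, Real.norm_eq_abs, abs_of_pos hcpos] at hkey
    have : ‖g y₁ z - g y₂ z‖ ≤ (C / c) * ‖y₁ - y₂‖ := by
      rw [div_mul_eq_mul_div, le_div_iff₀ hcpos, mul_comm]
      linarith
    have hCc : C / c = 2 * C / ε * ‖z‖ := by
      field_simp [hc']
      rw [hc']
      field_simp
    rw [hCc] at this
    linarith [this]

/-- Global uniqueness of Carathéodory solutions for a right-hand side that is C¹ on an
open set `V` and linear in the second variable: two solutions for the same `γ` which
agree at one point agree on all of `[a,b]`. -/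
theorem global_uniqueness_caratheodory_c1
    {E Z : Type*} [NormedAddCommGroup E] [NormedSpace ℝ E] [CompleteSpace E]
    [NormedAddCommGroup Z] [NormedSpace ℝ Z] [CompleteSpace Z]
    (V : Set E) (hV : IsOpen V) (g : E → Z → E)
    (hg : ContDiffOn ℝ 1 (fun p : E × Z => g p.1 p.2) (V ×ˢ (univ : Set Z)))
    (hlin : ∀ x ∈ V, IsLinearMap ℝ (g x))
    (a b : ℝ) (hab : a < b) (γ : ℝ → Z) (hγ : IntegrableOn γ (Icc a b))
    (η₁ η₂ : ℝ → E)
    (hη₁V : ∀ t ∈ Icc a b, η₁ t ∈ V) (hη₂V : ∀ t ∈ Icc a b, η₂ t ∈ V)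
    (t₀ : ℝ) (ht₀ : t₀ ∈ Icc a b)
    (hη₁ : IsCaraSol g γ a b t₀ η₁) (hη₂ : IsCaraSol g γ a b t₀ η₂)
    (heq : η₁ t₀ = η₂ t₀) :
    EqOn η₁ η₂ (Icc a b) := by
  obtain ⟨hc₁, hi₁, heq₁⟩ := hη₁
  obtain ⟨hc₂, hi₂, heq₂⟩ := hη₂
  -- interval integrability of right-hand sides on subintervals
  have hint : ∀ (η : ℝ → E), IntegrableOn (fun u => g (η u) (γ u)) (Icc a b) →
      ∀ s ∈ Icc a b, ∀ t ∈ Icc a b,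
      IntervalIntegrable (fun u => g (η u) (γ u)) volume s t := by
    intro η hη s hs t ht
    exact (hη.mono_set (uIcc_subset_Icc hs ht)).intervalIntegrable
  -- reanchoring
  have hre : ∀ (η : ℝ → E) (hη : IntegrableOn (fun u => g (η u) (γ u)) (Icc a b)),
      (∀ t ∈ Icc a b, η t = η t₀ + ∫ u in t₀..t, g (η u) (γ u)) →
      ∀ s ∈ Icc a b, ∀ t ∈ Icc a b,
      η t - η s = ∫ u in s..t, g (η u) (γ u) := by
    intro η hη hsol s hs t ht
    have h := intervalIntegral.integral_interval_sub_left
      (hint η hη t₀ ht₀ t ht) (hint η hη t₀ ht₀ s hs)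
    rw [hsol t ht, hsol s hs, ← h]
    abel
  -- the clopen set
  haveI : PreconnectedSpace (Icc a b) := Subtype.preconnectedSpace isPreconnected_Icc
  set S : Set (Icc a b) := {t | η₁ ↑t = η₂ ↑t} with hS
  have hclosed : IsClosed S := isClosed_eq hc₁.restrict hc₂.restrict
  have hopen : IsOpen S := by
    rw [isOpen_iff_forall_mem_open]
    rintro ⟨s, hsmem⟩ hs'
    have hxeq : η₁ s = η₂ s := hs'
    have hxV : η₁ s ∈ V := hη₁V s hsmem
    obtain ⟨r, hr, L, hL, hrV, hlip⟩ := loc_lip V hV g hg hlin (η₁ s) hxV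
    obtain ⟨δ₁, hδ₁, H1⟩ := Metric.continuousWithinAt_iff.mp (hc₁ s hsmem) r hr
    obtain ⟨δ₂, hδ₂, H2⟩ := Metric.continuousWithinAt_iff.mp (hc₂ s hsmem) r hr
    set δ' : ℝ := min δ₁ δ₂ with hδ'def
    have hδ' : 0 < δ' := lt_min hδ₁ hδ₂
    -- absolute continuity: pick δ
    have hgint : Integrable (fun u => ‖γ u‖) (volume.restrict (Icc a b)) := hγ.norm
    have hmeas : Filter.Tendsto (fun δ : ℝ => (volume.restrict (Icc a b)) (Icc (s-δ) (s+δ)))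
        (nhdsWithin 0 (Ioi 0)) (nhds 0) := by
      have t0 : Filter.Tendsto (fun δ : ℝ => s + δ - (s - δ)) (nhdsWithin 0 (Ioi 0)) (nhds 0) := by
        have he : (fun δ : ℝ => s + δ - (s - δ)) = fun δ : ℝ => 2*δ := by funext δ; ring
        rw [he]
        have h : Filter.Tendsto (fun δ : ℝ => 2*δ) (nhds 0) (nhds (0:ℝ)) := by
          exact (continuous_mul_left (2:ℝ)).tendsto' 0 0 (by simp)
        exact h.mono_left nhdsWithin_le_nhds
      have t1 : Filter.Tendsto (fun δ : ℝ => ENNReal.ofReal (s + δ - (s - δ)))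
          (nhdsWithin 0 (Ioi 0)) (nhds 0) := by
        exact (ENNReal.continuous_ofReal.tendsto' 0 0 (by simp)).comp t0
      refine tendsto_of_tendsto_of_tendsto_of_le_of_le tendsto_const_nhds t1
        (fun δ => zero_le) (fun δ => ?_)
      calc (volume.restrict (Icc a b)) (Icc (s-δ) (s+δ))
          ≤ volume (Icc (s-δ) (s+δ)) := Measure.restrict_apply_le _ _
        _ = ENNReal.ofReal (s + δ - (s - δ)) := Real.volume_Icc
    have htend := hgint.tendsto_setIntegral_nhds_zero hmeas
    have hev1 : ∀ᶠ δ : ℝ in nhdsWithin 0 (Ioi 0),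
        (∫ u in Icc (s-δ) (s+δ), ‖γ u‖ ∂(volume.restrict (Icc a b))) < 1/(2*L) :=
      htend.eventually_lt_const (by positivity)
    have hev2 : ∀ᶠ δ : ℝ in nhdsWithin 0 (Ioi 0), δ < δ' :=
      Filter.eventually_iff_exists_mem.mpr
        ⟨Iio δ', nhdsWithin_le_nhds (Iio_mem_nhds hδ'), fun y hy => hy⟩
    have hev3 : ∀ᶠ δ : ℝ in nhdsWithin 0 (Ioi 0), 0 < δ :=
      eventually_mem_nhdsWithin
    obtain ⟨δ, hvint, hδδ', hδpos⟩ := (hev1.and (hev2.and hev3)).exists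
    -- the local interval
    set J : Set ℝ := Icc (s - δ) (s + δ) ∩ Icc a b with hJdef
    have hJsub : J ⊆ Icc a b := inter_subset_right
    have hsJ : s ∈ J := ⟨⟨by linarith, by linarith⟩, hsmem⟩
    have hJint : (∫ u in J, ‖γ u‖) ≤ 1/(2*L) := by
      rw [hJdef, ← Measure.restrict_restrict measurableSet_Icc]
      exact hvint.le
    have hJball : ∀ t ∈ J, η₁ t ∈ Metric.ball (η₁ s) r ∧ η₂ t ∈ Metric.ball (η₁ s) r := by
      rintro t ⟨ht1, ht2⟩
      have hd : dist t s < δ' := by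
        rw [Real.dist_eq]
        have : |t - s| ≤ δ := abs_le.mpr ⟨by linarith [ht1.1], by linarith [ht1.2]⟩
        linarith
      constructor
      · exact Metric.mem_ball.mpr (H1 ht2 (hd.trans_le (min_le_left _ _)))
      · have := H2 ht2 (hd.trans_le (min_le_right _ _))
        rw [← hxeq] at this
        exact Metric.mem_ball.mpr this
    -- compactness
    have hJIcc : J = Icc (max (s-δ) a) (min (s+δ) b) := Icc_inter_Icc
    have hJcomp : IsCompact J := by rw [hJIcc]; exact isCompact_Icc
    have hJne : J.Nonempty := ⟨s, hsJ⟩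
    have hφcont : ContinuousOn (fun t => ‖η₁ t - η₂ t‖) J :=
      ((hc₁.sub hc₂).norm).mono hJsub
    obtain ⟨w, hwJ, hmax⟩ := hJcomp.exists_isMaxOn hJne hφcont
    have hmax' : ∀ t ∈ J, ‖η₁ t - η₂ t‖ ≤ ‖η₁ w - η₂ w‖ := fun t ht => hmax ht
    set M : ℝ := ‖η₁ w - η₂ w‖ with hM
    have hM0 : 0 ≤ M := norm_nonneg _
    have hJord : OrdConnected J := (ordConnected_Icc).inter (ordConnected_Icc)
    have huIcc : uIcc s w ⊆ J := hJord.uIcc_subset hsJ hwJ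
    have huIoc : uIoc s w ⊆ J := Set.Ioc_subset_Icc_self.trans huIcc
    -- integral identity for the difference
    have hde : η₁ w - η₂ w = ∫ u in s..w, (g (η₁ u) (γ u) - g (η₂ u) (γ u)) := by
      have e1 := hre η₁ hi₁ heq₁ s hsmem w (hJsub hwJ)
      have e2 := hre η₂ hi₂ heq₂ s hsmem w (hJsub hwJ)
      rw [intervalIntegral.integral_sub (hint η₁ hi₁ s hsmem w (hJsub hwJ))
        (hint η₂ hi₂ s hsmem w (hJsub hwJ)), ← e1, ← e2, hxeq]
      abel
    -- the contraction estimate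
    have hMle : M ≤ M / 2 := by
      have hsub2 : uIoc s w ⊆ Icc a b := huIoc.trans hJsub
      have hintdiff : IntegrableOn (fun u => ‖g (η₁ u) (γ u) - g (η₂ u) (γ u)‖) (uIoc s w) :=
        MeasureTheory.IntegrableOn.mono_set ((hi₁.sub hi₂).norm) hsub2
      have hintγ : IntegrableOn (fun u => L * ‖γ u‖ * M) (uIoc s w) :=
        (((MeasureTheory.IntegrableOn.mono_set hγ.norm hsub2).const_mul L).mul_const M)
      have step1 : M ≤ ∫ u in uIoc s w, ‖g (η₁ u) (γ u) - g (η₂ u) (γ u)‖ := by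
        rw [hM, hde]
        exact intervalIntegral.norm_integral_le_integral_norm_uIoc
      have step2 : (∫ u in uIoc s w, ‖g (η₁ u) (γ u) - g (η₂ u) (γ u)‖)
          ≤ ∫ u in uIoc s w, L * ‖γ u‖ * M := by
        refine setIntegral_mono_on hintdiff hintγ measurableSet_uIoc ?_
        intro u hu
        have huJ : u ∈ J := huIoc hu
        obtain ⟨hb1, hb2⟩ := hJball u huJ
        calc ‖g (η₁ u) (γ u) - g (η₂ u) (γ u)‖
            ≤ L * ‖γ u‖ * ‖η₁ u - η₂ u‖ := hlip (η₁ u) hb1 (η₂ u) hb2 (γ u)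
          _ ≤ L * ‖γ u‖ * M := by
              refine mul_le_mul_of_nonneg_left (hmax' u huJ) (by positivity)
      have step3 : (∫ u in uIoc s w, L * ‖γ u‖ * M) ≤ ∫ u in J, L * ‖γ u‖ * M := by
        refine setIntegral_mono_set (((MeasureTheory.IntegrableOn.mono_set hγ.norm hJsub).const_mul L).mul_const M)
          ?_ (HasSubset.Subset.eventuallyLE huIoc)
        filter_upwards with u
        positivity
      have step4 : (∫ u in J, L * ‖γ u‖ * M) ≤ M / 2 := by
        have : (∫ u in J, L * ‖γ u‖ * M) = (L * M) * ∫ u in J, ‖γ u‖ := by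
          rw [← integral_const_mul]
          congr 1 with u
          ring
        rw [this]
        calc (L * M) * ∫ u in J, ‖γ u‖ ≤ (L * M) * (1/(2*L)) := by
              refine mul_le_mul_of_nonneg_left hJint (by positivity)
          _ = M / 2 := by field_simp
      linarith
    have hMzero : M = 0 := by linarith
    have hzero : ∀ t ∈ J, η₁ t = η₂ t := by
      intro t ht
      have := (hmax' t ht).trans_eq hMzero
      have := le_antisymm this (norm_nonneg _)
      exact sub_eq_zero.mp (norm_eq_zero.mp this)
    refine ⟨Subtype.val ⁻¹' Metric.ball s δ, ?_, Metric.isOpen_ball.preimage continuous_subtype_val,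
      by simpa [Metric.mem_ball] using hδpos⟩
    rintro ⟨t, htmem⟩ ht'
    have htb : dist t s < δ := ht'
    have habs := abs_lt.mp (by rwa [Real.dist_eq] at htb)
    exact hzero t ⟨⟨by linarith [habs.1], by linarith [habs.2]⟩, htmem⟩
  have hSuniv : S = univ := IsClopen.eq_univ ⟨hclosed, hopen⟩ ⟨⟨t₀, ht₀⟩, heq⟩
  intro t ht
  have : (⟨t, ht⟩ : Icc a b) ∈ S := hSuniv.symm ▸ mem_univ _
  exact this
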